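/- Let g_j(x) = x_j for j = 1,…,d, g_{d+1}(x) = 1 - ∑ x_i, and φ* be the uniform probability measure on the canonical simplex in ℝ^d. Then for all x ∈ ℝ^d: ∑_{|α| ≤ 2, α ∈ ℕ^{d+1}} g(x)^α / φ*(g^α) = (d+2)(d+3)/2, where g(x)^α = ∏_{j=1}^{d+1} g_j(x)^{α_j}. -/

import Mathlib

open MeasureTheory Finset ENNReal

/-- The generators of the canonical simplex: `g_j(x) = x_j` for `j < d` and
`g_{d+1}(x) = 1 - ∑ x_i`. -/
noncomputable def simplexGen (d : ℕ) (j : Fin (d + 1)) (y : Fin d → ℝ) : ℝ :=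
  if h : (j : ℕ) < d then y ⟨j, h⟩ else 1 - ∑ i, y i

lemma beta_real (m n : ℕ) :
    ∫ x in (0:ℝ)..1, x ^ m * (1 - x) ^ n
      = (m.factorial * n.factorial : ℝ) / (m + n + 1).factorial := by
  have h := Complex.Gamma_mul_Gamma_eq_betaIntegral
    (s := (m : ℂ) + 1) (t := (n : ℂ) + 1) (by simp; positivity) (by simp; positivity)
  have hB : Complex.betaIntegral ((m : ℂ) + 1) ((n : ℂ) + 1)
      = ((∫ x in (0:ℝ)..1, x ^ m * (1 - x) ^ n : ℝ) : ℂ) := by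
    rw [Complex.betaIntegral, ← intervalIntegral.integral_ofReal]
    refine intervalIntegral.integral_congr fun x _ => ?_
    push_cast
    rw [add_sub_cancel_right, add_sub_cancel_right, Complex.cpow_natCast,
      Complex.cpow_natCast]
  have h1 : Complex.Gamma ((m : ℂ) + 1) = (m.factorial : ℂ) := by
    exact_mod_cast Complex.Gamma_nat_eq_factorial m
  have h2 : Complex.Gamma ((n : ℂ) + 1) = (n.factorial : ℂ) := by
    exact_mod_cast Complex.Gamma_nat_eq_factorial n
  have h3 : Complex.Gamma ((m : ℂ) + 1 + ((n : ℂ) + 1)) = ((m + n + 1).factorial : ℂ) := by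
    have : (m : ℂ) + 1 + ((n : ℂ) + 1) = ((m + n + 1 : ℕ) : ℂ) + 1 := by push_cast; ring
    rw [this]
    exact_mod_cast Complex.Gamma_nat_eq_factorial (m + n + 1)
  rw [h1, h2, h3, hB] at h
  have hne : ((m + n + 1).factorial : ℂ) ≠ 0 := by exact_mod_cast (m + n + 1).factorial_ne_zero
  field_simp
  rw [mul_comm]; exact_mod_cast h.symm

lemma beta_scaled (c : ℝ) (m n : ℕ) :
    ∫ x in (0:ℝ)..c, x ^ m * (c - x) ^ n
      = c ^ (m + n + 1) * ((m.factorial * n.factorial : ℝ) / (m + n + 1).factorial) := by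
  have h := intervalIntegral.smul_integral_comp_mul_left
    (fun x : ℝ => x ^ m * (c - x) ^ n) c (a := 0) (b := 1)
  simp only [mul_zero, mul_one, smul_eq_mul] at h
  rw [← h]
  have : ∀ x : ℝ, (c * x) ^ m * (c - c * x) ^ n = c ^ (m + n) * (x ^ m * (1 - x) ^ n) := by
    intro x
    have : c - c * x = c * (1 - x) := by ring
    rw [this, mul_pow, mul_pow]; ring
  simp only [this]
  rw [intervalIntegral.integral_const_mul, beta_real]
  ring

lemma beta_lintegral (c : ℝ) (m n : ℕ) :
    ∫⁻ t in Set.Icc 0 c, ENNReal.ofReal t ^ m * ENNReal.ofReal (c - t) ^ n ∂volume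
      = ENNReal.ofReal c ^ (m + n + 1)
        * ENNReal.ofReal ((m.factorial * n.factorial : ℝ) / (m + n + 1).factorial) := by
  rcases le_or_gt c 0 with hc | hc
  · rw [setLIntegral_measure_zero _ _ (by simp [Real.volume_Icc, hc] : volume (Set.Icc (0:ℝ) c) = 0)]
    rw [ENNReal.ofReal_eq_zero.2 hc, zero_pow (Nat.succ_ne_zero _), zero_mul]
  · have h1 : ∫⁻ t in Set.Icc 0 c, ENNReal.ofReal t ^ m * ENNReal.ofReal (c - t) ^ n ∂volume
        = ∫⁻ t in Set.Icc 0 c, ENNReal.ofReal (t ^ m * (c - t) ^ n) ∂volume := by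
      refine setLIntegral_congr_fun measurableSet_Icc (fun t ht => ?_)
      rw [ENNReal.ofReal_mul (pow_nonneg ht.1 m), ← ENNReal.ofReal_pow ht.1,
        ← ENNReal.ofReal_pow (sub_nonneg.2 ht.2)]
    have hint : IntegrableOn (fun t : ℝ => t ^ m * (c - t) ^ n) (Set.Icc 0 c) volume :=
      (Continuous.mul (continuous_pow m) ((continuous_const.sub continuous_id).pow n)).integrableOn_Icc
    have hnn : 0 ≤ᵐ[volume.restrict (Set.Icc 0 c)] fun t : ℝ => t ^ m * (c - t) ^ n :=
      (ae_restrict_iff' measurableSet_Icc).2 (ae_of_all _ fun t ht =>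
        mul_nonneg (pow_nonneg ht.1 _) (pow_nonneg (sub_nonneg.2 ht.2) _))
    rw [h1, ← ofReal_integral_eq_lintegral_ofReal hint hnn]
    rw [MeasureTheory.integral_Icc_eq_integral_Ioc,
      ← intervalIntegral.integral_of_le hc.le, beta_scaled]
    rw [ENNReal.ofReal_mul (by positivity), ENNReal.ofReal_pow hc.le]

def Spx (d : ℕ) : Set (Fin d → ℝ) := {y | (∀ i, 0 ≤ y i) ∧ (∑ i, y i) ≤ 1}

lemma measurableSet_Spx (d : ℕ) : MeasurableSet (Spx d) := by
  have : Spx d = (⋂ i, {y : Fin d → ℝ | 0 ≤ y i}) ∩ {y | (∑ i, y i) ≤ 1} := by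
    ext y; simp [Spx, Set.mem_iInter]
  rw [this]
  exact (MeasurableSet.iInter fun i =>
      measurableSet_le measurable_const (measurable_pi_apply i)).inter
    (measurableSet_le (Finset.measurable_sum _ fun i _ => measurable_pi_apply i)
      measurable_const)

lemma measurable_simplexGen (d : ℕ) (j : Fin (d + 1)) : Measurable (simplexGen d j) := by
  unfold simplexGen
  split_ifs with h
  · exact measurable_pi_apply _
  · exact measurable_const.sub (Finset.measurable_sum _ fun i _ => measurable_pi_apply i)

lemma simplexGen_nonneg {d : ℕ} (j : Fin (d + 1)) {y : Fin d → ℝ} (hy : y ∈ Spx d) :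
    0 ≤ simplexGen d j y := by
  unfold simplexGen; split_ifs with h
  · exact hy.1 _
  · have : (∑ i, y i) ≤ 1 := hy.2; linarith

lemma simplexGen_castSucc {d : ℕ} (j : Fin d) (y : Fin d → ℝ) :
    simplexGen d j.castSucc y = y j := by
  unfold simplexGen
  rw [dif_pos (by simpa using j.isLt)]
  congr 1

lemma simplexGen_last (d : ℕ) (y : Fin d → ℝ) :
    simplexGen d (Fin.last d) y = 1 - ∑ i, y i := by
  unfold simplexGen; rw [dif_neg (by simp)]

lemma sum_simplexGen (d : ℕ) (y : Fin d → ℝ) : ∑ j, simplexGen d j y = 1 := by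
  rw [Fin.sum_univ_castSucc]
  simp only [simplexGen_castSucc, simplexGen_last]
  ring

lemma simplexGen_snoc_castSucc {d : ℕ} (j : Fin d) (z : Fin d → ℝ) (t : ℝ) :
    simplexGen (d + 1) j.castSucc.castSucc (Fin.snoc z t) = z j := by
  rw [simplexGen_castSucc]
  simp

lemma simplexGen_snoc_mid {d : ℕ} (z : Fin d → ℝ) (t : ℝ) :
    simplexGen (d + 1) (Fin.castSucc (Fin.last d)) (Fin.snoc z t) = t := by
  rw [simplexGen_castSucc]
  simp

lemma sum_snoc {d : ℕ} (z : Fin d → ℝ) (t : ℝ) :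
    ∑ i, Fin.snoc z t i = (∑ i, z i) + t := by
  rw [Fin.sum_univ_castSucc]
  simp

lemma simplexGen_snoc_last {d : ℕ} (z : Fin d → ℝ) (t : ℝ) :
    simplexGen (d + 1) (Fin.last (d + 1)) (Fin.snoc z t) = 1 - ((∑ i, z i) + t) := by
  rw [simplexGen_last, sum_snoc]

theorem simplex_lintegral_key (d : ℕ) : ∀ a : Fin (d + 1) → ℕ,
    ∫⁻ y in Spx d, ∏ j, ENNReal.ofReal (simplexGen d j y) ^ a j ∂volume
      = ENNReal.ofReal ((∏ j, ((a j).factorial : ℝ)) / ((d + ∑ j, a j).factorial : ℝ)) := by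
  induction d with
  | zero =>
    intro a
    have hS : Spx 0 = Set.univ := by
      ext y
      simp [Spx]
    have hg : ∀ y : Fin 0 → ℝ, ∏ j, ENNReal.ofReal (simplexGen 0 j y) ^ a j = 1 := by
      intro y
      rw [Fin.prod_univ_one]
      have h1 : simplexGen 0 0 y = 1 := by unfold simplexGen; simp
      rw [h1]
      simp
    rw [hS, Measure.restrict_univ, lintegral_congr hg, lintegral_one]
    have hv : (volume : Measure (Fin 0 → ℝ)) Set.univ = 1 := by
      rw [MeasureTheory.volume_pi, Measure.pi_univ]
      simp
    rw [hv, Fin.prod_univ_one, Fin.sum_univ_one, Nat.zero_add,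
      div_self (by exact_mod_cast (a 0).factorial_ne_zero), ENNReal.ofReal_one]
  | succ d ih =>
    intro a
    set m := a (Fin.castSucc (Fin.last d)) with hm
    set n := a (Fin.last (d + 1)) with hn
    set β : ℝ≥0∞ := ENNReal.ofReal ((m.factorial * n.factorial : ℝ) / (m + n + 1).factorial)
      with hβ
    set a' : Fin (d + 1) → ℕ :=
      Fin.snoc (fun j : Fin d => a j.castSucc.castSucc) (m + n + 1) with ha'
    set F : (Fin (d + 1) → ℝ) → ℝ≥0∞ :=
      fun y => ∏ j, ENNReal.ofReal (simplexGen (d + 1) j y) ^ a j with hF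
    set G : (Fin d → ℝ) → ℝ≥0∞ :=
      fun z => ∏ j, ENNReal.ofReal (simplexGen d j z) ^ a' j with hG
    have hFmeas : Measurable F :=
      Finset.measurable_prod _ fun j _ =>
        ((measurable_simplexGen _ j).ennreal_ofReal).pow_const _
    have hGmeas : Measurable G :=
      Finset.measurable_prod _ fun j _ =>
        ((measurable_simplexGen _ j).ennreal_ofReal).pow_const _
    have heq : (fun p : ℝ × (Fin d → ℝ) => (Fin.snoc p.2 p.1 : Fin (d + 1) → ℝ))
        = ⇑(MeasurableEquiv.piFinSuccAbove (fun _ : Fin (d + 1) => ℝ) (Fin.last d)).symm := by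
      funext p
      simp [MeasurableEquiv.piFinSuccAbove, Fin.insertNth_last', Fin.snocEquiv]
    have hsnocmeas : Measurable
        (fun p : ℝ × (Fin d → ℝ) => (Fin.snoc p.2 p.1 : Fin (d + 1) → ℝ)) := by
      rw [heq]; exact (MeasurableEquiv.piFinSuccAbove _ _).symm.measurable
    have h0 : ∫⁻ y in Spx (d + 1), F y ∂volume
        = ∫⁻ p : ℝ × (Fin d → ℝ), (Spx (d + 1)).indicator F (Fin.snoc p.2 p.1) ∂volume := by
      rw [← lintegral_indicator (measurableSet_Spx (d + 1)) F]
      have hmp := (volume_preserving_piFinSuccAbove (fun _ : Fin (d + 1) => ℝ) (Fin.last d)).symm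
      rw [← hmp.lintegral_comp (hFmeas.indicator (measurableSet_Spx _))]
      refine lintegral_congr fun p => ?_
      rw [← heq]
    have h1 : ∫⁻ p : ℝ × (Fin d → ℝ), (Spx (d + 1)).indicator F (Fin.snoc p.2 p.1) ∂volume
        = ∫⁻ z : Fin d → ℝ, ∫⁻ t : ℝ, (Spx (d + 1)).indicator F (Fin.snoc z t) ∂volume
            ∂volume := by
      rw [MeasureTheory.Measure.volume_eq_prod, lintegral_prod_symm]
      exact ((hFmeas.indicator (measurableSet_Spx _)).comp hsnocmeas).aemeasurable
    have inner : ∀ z : Fin d → ℝ,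
        (∫⁻ t : ℝ, (Spx (d + 1)).indicator F (Fin.snoc z t) ∂volume)
          = (Spx d).indicator G z * β := by
      intro z
      by_cases hz : ∀ i, 0 ≤ z i
      · set c : ℝ := 1 - ∑ i, z i with hc
        set C : ℝ≥0∞ := ∏ j : Fin d, ENNReal.ofReal (z j) ^ a j.castSucc.castSucc with hC
        have hCne : C ≠ ⊤ := by
          rw [hC]
          exact ENNReal.prod_ne_top fun j _ => ENNReal.pow_ne_top ENNReal.ofReal_ne_top
        have hmem : ∀ t : ℝ, (Fin.snoc z t : Fin (d + 1) → ℝ) ∈ Spx (d + 1)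
            ↔ t ∈ Set.Icc 0 c := by
          intro t
          rw [Set.mem_Icc]
          constructor
          · rintro ⟨h1', h2'⟩
            have h3 := h1' (Fin.last d)
            rw [Fin.snoc_last] at h3
            rw [sum_snoc] at h2'
            exact ⟨h3, by rw [hc]; linarith⟩
          · rintro ⟨ht0, ht1⟩
            rw [hc] at ht1
            constructor
            · intro i
              refine Fin.lastCases ?_ ?_ i
              · rw [Fin.snoc_last]; exact ht0
              · intro j; rw [Fin.snoc_castSucc]; exact hz j
            · rw [sum_snoc]; linarith
        have hFval : ∀ t, F (Fin.snoc z t)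
            = C * (ENNReal.ofReal t ^ m * ENNReal.ofReal (1 - ((∑ i, z i) + t)) ^ n) := by
          intro t
          rw [hF]
          simp only []
          rw [Fin.prod_univ_castSucc, Fin.prod_univ_castSucc]
          simp only [simplexGen_snoc_castSucc, simplexGen_snoc_mid, simplexGen_snoc_last]
          rw [hC, ← hm, ← hn]
          ring
        have hindic : ∀ t : ℝ, (Spx (d + 1)).indicator F (Fin.snoc z t)
            = (Set.Icc (0:ℝ) c).indicator
                (fun t => C * (ENNReal.ofReal t ^ m * ENNReal.ofReal (c - t) ^ n)) t := by
          intro t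
          by_cases ht : t ∈ Set.Icc (0:ℝ) c
          · rw [Set.indicator_of_mem ht, Set.indicator_of_mem ((hmem t).2 ht), hFval t]
            have : 1 - ((∑ i, z i) + t) = c - t := by rw [hc]; ring
            rw [this]
          · rw [Set.indicator_of_notMem ht,
              Set.indicator_of_notMem (fun hmem' => ht ((hmem t).1 hmem'))]
        rw [lintegral_congr hindic, lintegral_indicator measurableSet_Icc,
          lintegral_const_mul' _ _ hCne, beta_lintegral]
        have hGval : (Spx d).indicator G z = C * ENNReal.ofReal c ^ (m + n + 1) := by
          by_cases hzs : (∑ i, z i) ≤ 1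
          · rw [Set.indicator_of_mem (show z ∈ Spx d from ⟨hz, hzs⟩), hG]
            simp only []
            rw [Fin.prod_univ_castSucc]
            simp only [simplexGen_castSucc, simplexGen_last, ha', Fin.snoc_castSucc,
              Fin.snoc_last]
            try rw [hC, hc]
          · rw [Set.indicator_of_notMem (fun h => hzs h.2)]
            have hc0 : ENNReal.ofReal c = 0 := by
              rw [ENNReal.ofReal_eq_zero, hc]; linarith [lt_of_not_ge hzs]
            rw [hc0, zero_pow (Nat.succ_ne_zero _), mul_zero]
        rw [hGval, hβ]
        ring
      · push_neg at hz
        obtain ⟨i, hi⟩ := hz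
        have h1' : ∀ t : ℝ, (Fin.snoc z t : Fin (d + 1) → ℝ) ∉ Spx (d + 1) := by
          intro t hmem'
          have := hmem'.1 i.castSucc
          rw [Fin.snoc_castSucc] at this
          exact absurd this (not_le.2 hi)
        have h2' : z ∉ Spx d := fun hmem' => absurd (hmem'.1 i) (not_le.2 hi)
        simp only [Set.indicator_of_notMem (h1' _), Set.indicator_of_notMem h2',
          zero_mul, lintegral_zero]
    rw [h0, h1, lintegral_congr inner,
      lintegral_mul_const' _ _ (by rw [hβ]; exact ENNReal.ofReal_ne_top),
      lintegral_indicator (measurableSet_Spx d), ih a', hβ]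
    have hsum' : ∑ j, a' j = (∑ j : Fin d, a j.castSucc.castSucc) + (m + n + 1) := by
      rw [Fin.sum_univ_castSucc]
      simp [ha']
    have hprod' : ∏ j, ((a' j).factorial : ℝ)
        = (∏ j : Fin d, ((a j.castSucc.castSucc).factorial : ℝ))
          * ((m + n + 1).factorial : ℝ) := by
      rw [Fin.prod_univ_castSucc]
      simp [ha']
    have hsumA : ∑ j, a j = (∑ j : Fin d, a j.castSucc.castSucc) + m + n := by
      rw [Fin.sum_univ_castSucc, Fin.sum_univ_castSucc, ← hm, ← hn]
    have hprodA : ∏ j, ((a j).factorial : ℝ)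
        = (∏ j : Fin d, ((a j.castSucc.castSucc).factorial : ℝ))
          * (m.factorial : ℝ) * (n.factorial : ℝ) := by
      rw [Fin.prod_univ_castSucc, Fin.prod_univ_castSucc, ← hm, ← hn]
      try push_cast
      try ring
    rw [← ENNReal.ofReal_mul (by positivity), hsum', hprod', hsumA, hprodA]
    congr 1
    have hDeq : d + ((∑ j : Fin d, a j.castSucc.castSucc) + (m + n + 1))
        = d + 1 + ((∑ j : Fin d, a j.castSucc.castSucc) + m + n) := by omega
    rw [hDeq]
    have hK : ((m + n + 1).factorial : ℝ) ≠ 0 := by exact_mod_cast (m + n + 1).factorial_ne_zero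
    have hD : ((d + 1 + ((∑ j : Fin d, a j.castSucc.castSucc) + m + n)).factorial : ℝ) ≠ 0 := by
      exact_mod_cast Nat.factorial_ne_zero _
    field_simp

lemma simplex_integral_key (d : ℕ) (a : Fin (d + 1) → ℕ) :
    ∫ y in {y : Fin d → ℝ | (∀ i, 0 ≤ y i) ∧ (∑ i, y i) ≤ 1},
        (∏ j, simplexGen d j y ^ a j) ∂((d.factorial : ℝ≥0∞) • volume)
      = (d.factorial : ℝ) * (∏ j, ((a j).factorial : ℝ))
          / ((d + ∑ j, a j).factorial : ℝ) := by
  have hmeas : Measurable fun y => ∏ j, simplexGen d j y ^ a j :=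
    Finset.measurable_prod _ fun j _ => (measurable_simplexGen d j).pow_const _
  show ∫ y in Spx d, (∏ j, simplexGen d j y ^ a j) ∂((d.factorial : ℝ≥0∞) • volume) = _
  rw [Measure.restrict_smul, integral_smul_measure]
  have h1 : 0 ≤ᵐ[volume.restrict (Spx d)] fun y => ∏ j, simplexGen d j y ^ a j :=
    (ae_restrict_iff' (measurableSet_Spx d)).2 (ae_of_all _ fun y hy =>
      Finset.prod_nonneg fun j _ => pow_nonneg (simplexGen_nonneg j hy) _)
  rw [integral_eq_lintegral_of_nonneg_ae h1 hmeas.aestronglyMeasurable]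
  have h2 : ∫⁻ y in Spx d, ENNReal.ofReal (∏ j, simplexGen d j y ^ a j) ∂volume
      = ∫⁻ y in Spx d, ∏ j, ENNReal.ofReal (simplexGen d j y) ^ a j ∂volume :=
    setLIntegral_congr_fun (measurableSet_Spx d) (fun y hy => by
      rw [ENNReal.ofReal_prod_of_nonneg fun j _ => pow_nonneg (simplexGen_nonneg j hy) _]
      exact Finset.prod_congr rfl fun j _ =>
        ENNReal.ofReal_pow (simplexGen_nonneg j hy) _)
  rw [h2, simplex_lintegral_key d a, ENNReal.toReal_ofReal (by positivity),
    ENNReal.toReal_natCast, smul_eq_mul, mul_div_assoc]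

/-- Degree-2 partition of unity on the canonical simplex: with `φ*` the uniform
probability measure on `S` (Lebesgue measure scaled by `d!`), summing
`g(x)^α / φ*(g^α)` over all multi-indices `α ∈ ℕ^{d+1}` with `|α| ≤ 2` gives
`(d+2)(d+3)/2` for every `x ∈ ℝ^d`. -/
theorem simplex_degree_two_partition (d : ℕ) (x : Fin d → ℝ) :
    ∑ α ∈ (Fintype.piFinset fun _ : Fin (d + 1) => Finset.range 3).filter
        (fun α => (∑ j, α j) ≤ 2),
      (∏ j, simplexGen d j x ^ α j) /
        (∫ y in {y : Fin d → ℝ | (∀ i, 0 ≤ y i) ∧ (∑ i, y i) ≤ 1},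
          (∏ j, simplexGen d j y ^ α j) ∂((d.factorial : ℝ≥0∞) • volume))
      = ((d : ℝ) + 2) * ((d : ℝ) + 3) / 2 := by
  have hset : (Fintype.piFinset fun _ : Fin (d + 1) => Finset.range 3).filter
        (fun α => (∑ j, α j) ≤ 2)
      = (Finset.range 3).biUnion
          (fun k => Finset.piAntidiag (Finset.univ : Finset (Fin (d + 1))) k) := by
    ext α
    simp only [Finset.mem_filter, Fintype.mem_piFinset, Finset.mem_range, Finset.mem_biUnion,
      Finset.mem_piAntidiag]
    constructor
    · rintro ⟨h1, h2⟩
      exact ⟨∑ j, α j, by omega, rfl, fun i _ => Finset.mem_univ i⟩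
    · rintro ⟨k, hk, hsum, -⟩
      have hs : ∑ j, α j = k := hsum
      have hle : ∀ j, α j ≤ ∑ i, α i := fun j =>
        Finset.single_le_sum (fun i _ => Nat.zero_le _) (Finset.mem_univ j)
      exact ⟨fun j => by have := hle j; omega, by omega⟩
  have hdisj : (↑(Finset.range 3) : Set ℕ).PairwiseDisjoint
      (fun k => Finset.piAntidiag (Finset.univ : Finset (Fin (d + 1))) k) := by
    intro u _ v _ huv
    refine Finset.disjoint_left.2 fun α hu hv => huv ?_
    rw [Finset.mem_piAntidiag] at hu hv
    rw [← hu.1, ← hv.1]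
  rw [hset, Finset.sum_biUnion hdisj]
  have hinner : ∀ k : ℕ,
      ∑ α ∈ Finset.piAntidiag (Finset.univ : Finset (Fin (d + 1))) k,
        (∏ j, simplexGen d j x ^ α j) /
          (∫ y in {y : Fin d → ℝ | (∀ i, 0 ≤ y i) ∧ (∑ i, y i) ≤ 1},
            (∏ j, simplexGen d j y ^ α j) ∂((d.factorial : ℝ≥0∞) • volume))
      = ((d + k).factorial : ℝ) / ((d.factorial : ℝ) * (k.factorial : ℝ)) := by
    intro k
    have hstep : ∀ α ∈ Finset.piAntidiag (Finset.univ : Finset (Fin (d + 1))) k,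
        (∏ j, simplexGen d j x ^ α j) /
          (∫ y in {y : Fin d → ℝ | (∀ i, 0 ≤ y i) ∧ (∑ i, y i) ≤ 1},
            (∏ j, simplexGen d j y ^ α j) ∂((d.factorial : ℝ≥0∞) • volume))
        = ((d + k).factorial : ℝ) / ((d.factorial : ℝ) * (k.factorial : ℝ))
          * ((Nat.multinomial Finset.univ α : ℝ) * ∏ j, simplexGen d j x ^ α j) := by
      intro α hα
      rw [Finset.mem_piAntidiag] at hα
      rw [simplex_integral_key d α, hα.1]
      have hspec := Nat.multinomial_spec (Finset.univ : Finset (Fin (d + 1))) α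
      rw [hα.1] at hspec
      have hspecR : (∏ j, ((α j).factorial : ℝ)) * (Nat.multinomial Finset.univ α : ℝ)
          = (k.factorial : ℝ) := by exact_mod_cast hspec
      have hQ : (∏ j, ((α j).factorial : ℝ)) ≠ 0 :=
        Finset.prod_ne_zero_iff.2 fun j _ => by
          exact_mod_cast (α j).factorial_ne_zero
      have hmult : (Nat.multinomial Finset.univ α : ℝ)
          = (k.factorial : ℝ) / ∏ j, ((α j).factorial : ℝ) := by
        rw [eq_div_iff hQ, mul_comm]
        exact hspecR
      rw [hmult]
      have hd0 : (d.factorial : ℝ) ≠ 0 := by exact_mod_cast d.factorial_ne_zero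
      have hk0 : (k.factorial : ℝ) ≠ 0 := by exact_mod_cast k.factorial_ne_zero
      field_simp
    rw [Finset.sum_congr rfl hstep, ← Finset.mul_sum]
    have hmulti : ∑ α ∈ Finset.piAntidiag (Finset.univ : Finset (Fin (d + 1))) k,
        (Nat.multinomial Finset.univ α : ℝ) * ∏ j, simplexGen d j x ^ α j
        = (∑ j, simplexGen d j x) ^ k :=
      (Finset.sum_pow_eq_sum_piAntidiag Finset.univ (fun j => simplexGen d j x) k).symm
    rw [hmulti, sum_simplexGen, one_pow, mul_one]
  rw [Finset.sum_congr rfl fun k _ => hinner k]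
  rw [Finset.sum_range_succ, Finset.sum_range_succ, Finset.sum_range_one]
  have e0 : (d + 0).factorial = d.factorial := by rw [Nat.add_zero]
  have e1 : (d + 1).factorial = (d + 1) * d.factorial := Nat.factorial_succ d
  have e2 : (d + 2).factorial = (d + 2) * ((d + 1) * d.factorial) := by
    rw [show d + 2 = (d + 1) + 1 from rfl, Nat.factorial_succ, Nat.factorial_succ]
  rw [e0, e1, e2]
  have hd0 : (d.factorial : ℝ) ≠ 0 := by exact_mod_cast d.factorial_ne_zero
  simp only [Nat.factorial_zero, Nat.factorial_one, Nat.factorial_two]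
  push_cast
  field_simp
  ring
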